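/- Define the Apéry numbers a_m = Σ_{k=0}^m C(m,k)²·C(m+k,k)². Then the sequence satisfies the recurrence m³·a_m = (34m³ − 51m² + 27m − 5)·a_{m−1} − (m−1)³·a_{m−2} for m ≥ 2, with a_0 = 1, a_1 = 5. -/

import Mathlib

open Finset

/-- The summand of the Apéry number, as an integer. -/
def Fk (n k : ℕ) : ℤ := ((n.choose k : ℤ))^2 * (((n+k).choose k : ℤ))^2

/-- WZ certificate (shifted by one): `gg n 0 = 0`,
`gg n (k+1) = 4(2n+1)(k(2k+1)-(2n+1)²)·Fk n k`. -/
def gg : ℕ → ℕ → ℤ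
  | _, 0 => 0
  | n, (k+1) => 4*(2*(n:ℤ)+1)*((k:ℤ)*(2*(k:ℤ)+1) - (2*(n:ℤ)+1)^2) * Fk n k

/-- The per-`k` WZ identity. -/
lemma apery_step (i k : ℕ) (hk : k ≤ i + 2) :
    ((i:ℤ)+2)^3 * Fk (i+2) k
      = (34*((i:ℤ)+2)^3 - 51*((i:ℤ)+2)^2 + 27*((i:ℤ)+2) - 5) * Fk (i+1) k
        - ((i:ℤ)+1)^3 * Fk i k + (gg (i+1) (k+1) - gg (i+1) k) := by
  rcases k with _ | j
  · -- k = 0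
    simp only [Fk, gg, Nat.choose_zero_right, Nat.add_zero, Nat.cast_one, one_pow]
    push_cast
    ring
  rcases Nat.lt_or_ge j (i+1) with hj | hj
  · -- main case 1 ≤ k = j+1 ≤ i+1
    have hj' : j ≤ i := by omega
    obtain ⟨d, rfl⟩ : ∃ d, i = j + d := ⟨i - j, by omega⟩
    simp only [Fk, gg]
    rw [show j+d+2+(j+1) = 2*j+d+3 from by omega, show j+d+1+(j+1) = 2*j+d+2 from by omega,
        show j+d+(j+1) = 2*j+d+1 from by omega, show j+d+1+j = 2*j+d+1 from by omega]
    have r1 : (j+d+1).choose (j+1) * (j+d+2) = (j+d+2).choose (j+1) * (d+1) := by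
      have h := Nat.choose_mul_succ_eq (j+d+1) (j+1)
      rw [show j+d+1+1 = j+d+2 from by omega, show j+d+2 - (j+1) = d+1 from by omega] at h
      exact h
    have r2 : (2*j+d+2).choose (j+1) * (2*j+d+3) = (2*j+d+3).choose (j+1) * (j+d+2) := by
      have h := Nat.choose_mul_succ_eq (2*j+d+2) (j+1)
      rw [show 2*j+d+2+1 = 2*j+d+3 from by omega, show 2*j+d+3 - (j+1) = j+d+2 from by omega] at h
      exact h
    have r3 : (j+d).choose (j+1) * (j+d+1) = (j+d+1).choose (j+1) * d := by
      have h := Nat.choose_mul_succ_eq (j+d) (j+1)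
      rw [show j+d+1 - (j+1) = d from by omega] at h
      exact h
    have r4 : (2*j+d+1).choose (j+1) * (2*j+d+2) = (2*j+d+2).choose (j+1) * (j+d+1) := by
      have h := Nat.choose_mul_succ_eq (2*j+d+1) (j+1)
      rw [show 2*j+d+1+1 = 2*j+d+2 from by omega, show 2*j+d+2 - (j+1) = j+d+1 from by omega] at h
      exact h
    have r5 : (j+d+1).choose (j+1) * (j+1) = (j+d+1).choose j * (d+1) := by
      have h := Nat.choose_succ_right_eq (j+d+1) j
      rw [show j+d+1 - j = d+1 from by omega] at h
      exact h
    have r6 : (2*j+d+1).choose j * (2*j+d+2) = (2*j+d+2).choose (j+1) * (j+1) := by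
      have h := Nat.add_one_mul_choose_eq (2*j+d+1) j
      rw [show 2*j+d+1+1 = 2*j+d+2 from by omega] at h
      rw [mul_comm]; exact h
    have e1 : ((j+d+1).choose (j+1) : ℤ) * ((j:ℤ)+d+2)
        = ((j+d+2).choose (j+1) : ℤ) * ((d:ℤ)+1) := by exact_mod_cast r1
    have e2 : ((2*j+d+2).choose (j+1) : ℤ) * (2*(j:ℤ)+d+3)
        = ((2*j+d+3).choose (j+1) : ℤ) * ((j:ℤ)+d+2) := by exact_mod_cast r2
    have e3 : ((j+d).choose (j+1) : ℤ) * ((j:ℤ)+d+1)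
        = ((j+d+1).choose (j+1) : ℤ) * (d:ℤ) := by exact_mod_cast r3
    have e4 : ((2*j+d+1).choose (j+1) : ℤ) * (2*(j:ℤ)+d+2)
        = ((2*j+d+2).choose (j+1) : ℤ) * ((j:ℤ)+d+1) := by exact_mod_cast r4
    have e5 : ((j+d+1).choose (j+1) : ℤ) * ((j:ℤ)+1)
        = ((j+d+1).choose j : ℤ) * ((d:ℤ)+1) := by exact_mod_cast r5
    have e6 : ((2*j+d+1).choose j : ℤ) * (2*(j:ℤ)+d+2)
        = ((2*j+d+2).choose (j+1) : ℤ) * ((j:ℤ)+1) := by exact_mod_cast r6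
    set x : ℤ := ((j+d+1).choose (j+1) : ℤ) with hx
    set y : ℤ := ((2*j+d+2).choose (j+1) : ℤ) with hy
    set b1 : ℤ := ((j+d+2).choose (j+1) : ℤ) with hb1
    set b2 : ℤ := ((2*j+d+3).choose (j+1) : ℤ) with hb2
    set b3 : ℤ := ((j+d).choose (j+1) : ℤ) with hb3
    set b4 : ℤ := ((2*j+d+1).choose (j+1) : ℤ) with hb4
    set b5 : ℤ := ((j+d+1).choose j : ℤ) with hb5
    set b6 : ℤ := ((2*j+d+1).choose j : ℤ) with hb6
    have t1 : (b1*((d:ℤ)+1))^2 = (x*((j:ℤ)+d+2))^2 := by rw [e1]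
    have t2 : (b2*((j:ℤ)+d+2))^2 = (y*(2*(j:ℤ)+d+3))^2 := by rw [e2]
    have t3 : (b3*((j:ℤ)+d+1))^2 = (x*(d:ℤ))^2 := by rw [e3]
    have t4 : (b4*(2*(j:ℤ)+d+2))^2 = (y*((j:ℤ)+d+1))^2 := by rw [e4]
    have t5 : (b5*((d:ℤ)+1))^2 = (x*((j:ℤ)+1))^2 := by rw [e5]
    have t6 : (b6*(2*(j:ℤ)+d+2))^2 = (y*((j:ℤ)+1))^2 := by rw [e6]
    push_cast
    refine mul_left_cancel₀
      (a := (((d:ℤ)+1)^2*((j:ℤ)+d+2)^2*((j:ℤ)+d+1)^2*(2*(j:ℤ)+d+2)^2)) (by positivity) ?_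
    linear_combination
        (((j:ℤ)+d+2)^3*((j:ℤ)+d+1)^2*(2*(j:ℤ)+d+2)^2) * ((b2*((j:ℤ)+d+2))^2) * t1
      + (((j:ℤ)+d+2)^3*((j:ℤ)+d+1)^2*(2*(j:ℤ)+d+2)^2) * ((x*((j:ℤ)+d+2))^2) * t2
      + (((j:ℤ)+d+1)^3*((d:ℤ)+1)^2*((j:ℤ)+d+2)^2) * ((b4*(2*(j:ℤ)+d+2))^2) * t3
      + (((j:ℤ)+d+1)^3*((d:ℤ)+1)^2*((j:ℤ)+d+2)^2) * ((x*(d:ℤ))^2) * t4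
      + (4*(2*((j:ℤ)+d+1)+1)*((j:ℤ)*(2*(j:ℤ)+1) - (2*((j:ℤ)+d+1)+1)^2)
          *((j:ℤ)+d+2)^2*((j:ℤ)+d+1)^2) * ((b6*(2*(j:ℤ)+d+2))^2) * t5
      + (4*(2*((j:ℤ)+d+1)+1)*((j:ℤ)*(2*(j:ℤ)+1) - (2*((j:ℤ)+d+1)+1)^2)
          *((j:ℤ)+d+2)^2*((j:ℤ)+d+1)^2) * ((x*((j:ℤ)+1))^2) * t6
  · -- boundary case k = i+2
    obtain rfl : j = i + 1 := by omega
    have hz1 : (i+1).choose (i+1+1) = 0 := Nat.choose_eq_zero_of_lt (by omega)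
    have hz2 : i.choose (i+1+1) = 0 := Nat.choose_eq_zero_of_lt (by omega)
    simp only [Fk, gg, hz1, hz2, Nat.choose_self]
    rw [show i+2+(i+1+1) = 2*i+4 from by omega, show i+1+(i+1) = 2*i+2 from by omega]
    have r1 : (2*i+3).choose (i+2) * (2*i+4) = (2*i+4).choose (i+2) * (i+2) := by
      have h := Nat.choose_mul_succ_eq (2*i+3) (i+2)
      rw [show 2*i+3+1 = 2*i+4 from by omega, show 2*i+4 - (i+2) = i+2 from by omega] at h
      exact h
    have r2 : (2*i+2).choose (i+1) * (2*i+3) = (2*i+3).choose (i+2) * (i+2) := by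
      have h := Nat.add_one_mul_choose_eq (2*i+2) (i+1)
      rw [show 2*i+2+1 = 2*i+3 from by omega,
        show i+1+1 = i+2 from by omega] at h
      rw [mul_comm]; exact h
    have e1 : ((2*i+3).choose (i+2) : ℤ) * (2*(i:ℤ)+4)
        = ((2*i+4).choose (i+2) : ℤ) * ((i:ℤ)+2) := by exact_mod_cast r1
    have e2 : ((2*i+2).choose (i+1) : ℤ) * (2*(i:ℤ)+3)
        = ((2*i+3).choose (i+2) : ℤ) * ((i:ℤ)+2) := by exact_mod_cast r2
    set z : ℤ := ((2*i+4).choose (i+2) : ℤ)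
    set v : ℤ := ((2*i+2).choose (i+1) : ℤ)
    have hzv : z*((i:ℤ)+2)^2 = (2*(i:ℤ)+4)*(2*(i:ℤ)+3)*v := by
      linear_combination (-((i:ℤ)+2))*e1 - (2*(i:ℤ)+4)*e2
    push_cast [show i+1+1 = i+2 from by omega]
    refine mul_left_cancel₀ (a := ((i:ℤ)+2)^4) (by positivity) ?_
    linear_combination ((i:ℤ)+2)^3*(z*((i:ℤ)+2)^2 + (2*(i:ℤ)+4)*(2*(i:ℤ)+3)*v)*hzv

/-- The summed (telescoped) recurrence. -/
lemma apery_master (i : ℕ) :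
    ((i:ℤ)+2)^3 * ∑ k ∈ range (i+3), Fk (i+2) k
      = (34*((i:ℤ)+2)^3 - 51*((i:ℤ)+2)^2 + 27*((i:ℤ)+2) - 5) * ∑ k ∈ range (i+2), Fk (i+1) k
        - ((i:ℤ)+1)^3 * ∑ k ∈ range (i+1), Fk i k := by
  have h0 : Fk (i+1) (i+2) = 0 := by
    simp [Fk, Nat.choose_eq_zero_of_lt (show i+1 < i+2 by omega)]
  have h1 : Fk i (i+1) = 0 := by
    simp [Fk, Nat.choose_eq_zero_of_lt (show i < i+1 by omega)]
  have h2 : Fk i (i+2) = 0 := by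
    simp [Fk, Nat.choose_eq_zero_of_lt (show i < i+2 by omega)]
  have hs : ∀ k ∈ range (i+3), ((i:ℤ)+2)^3 * Fk (i+2) k
      = (34*((i:ℤ)+2)^3 - 51*((i:ℤ)+2)^2 + 27*((i:ℤ)+2) - 5) * Fk (i+1) k
        - ((i:ℤ)+1)^3 * Fk i k + (gg (i+1) (k+1) - gg (i+1) k) := by
    intro k hk
    exact apery_step i k (by simpa using Nat.lt_succ_iff.mp (mem_range.mp hk))
  have big := Finset.sum_congr rfl hs
  rw [← Finset.mul_sum, Finset.sum_add_distrib, Finset.sum_sub_distrib,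
    ← Finset.mul_sum, ← Finset.mul_sum, Finset.sum_range_sub (gg (i+1))] at big
  have hgg : gg (i+1) (i+3) = 0 := by
    rw [show i+3 = (i+2)+1 from rfl]
    simp [gg, h0]
  have hgg0 : gg (i+1) 0 = 0 := rfl
  rw [hgg, hgg0, show i+3 = (i+2)+1 from rfl, Finset.sum_range_succ (Fk (i+1)),
    Finset.sum_range_succ (Fk i), Finset.sum_range_succ (Fk i), h0, h1, h2] at big
  rw [show (i+2)+1 = i+3 from rfl] at big
  linear_combination big

/-- The Apéry numbers `a_m = Σ_{k=0}^m C(m,k)²·C(m+k,k)²` satisfy `a_0 = 1`,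
`a_1 = 5`, and the recurrence
`m³·a_m = (34m³ − 51m² + 27m − 5)·a_{m−1} − (m−1)³·a_{m−2}` for `m ≥ 2`. -/
theorem apery_recurrence (a : ℕ → ℕ)
    (ha : ∀ m, a m = ∑ k ∈ Finset.range (m + 1),
      (m.choose k) ^ 2 * ((m + k).choose k) ^ 2) :
    a 0 = 1 ∧ a 1 = 5 ∧
      ∀ m : ℕ, 2 ≤ m →
        (m : ℤ) ^ 3 * a m =
          (34 * (m : ℤ) ^ 3 - 51 * (m : ℤ) ^ 2 + 27 * (m : ℤ) - 5) * a (m - 1)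
            - ((m : ℤ) - 1) ^ 3 * a (m - 2) := by
  refine ⟨by simp [ha], ?_, ?_⟩
  · rw [ha]; decide
  · intro m hm
    obtain ⟨i, rfl⟩ : ∃ i, m = i + 2 := ⟨m - 2, by omega⟩
    rw [show i+2-1 = i+1 from by omega, show i+2-2 = i from by omega,
      ha (i+2), ha (i+1), ha i]
    have hm := apery_master i
    have c2 : ((∑ k ∈ range (i+3), Fk (i+2) k) : ℤ)
        = ∑ k ∈ Finset.range (i+2+1), (((i+2).choose k : ℤ)) ^ 2 * (((i+2+k).choose k : ℤ)) ^ 2 := rfl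
    have c1 : ((∑ k ∈ range (i+2), Fk (i+1) k) : ℤ)
        = ∑ k ∈ Finset.range (i+1+1), (((i+1).choose k : ℤ)) ^ 2 * (((i+1+k).choose k : ℤ)) ^ 2 := rfl
    have c0 : ((∑ k ∈ range (i+1), Fk i k) : ℤ)
        = ∑ k ∈ Finset.range (i+1), ((i.choose k : ℤ)) ^ 2 * (((i+k).choose k : ℤ)) ^ 2 := rfl
    rw [c2, c1, c0] at hm
    push_cast
    linear_combination hm
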